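/- Let n ≥ 2 and let a_1, …, a_n be complex numbers with ∏_{i=1}^n a_i = 1, and let p(X) = ∏_{i=1}^n (X − a_i) = Σ_{j=0}^n (−1)^j s_j X^{n−j}. Define the length L(p) = Σ_{j=0}^n |s_j|. Then 2·√(2/n)·max{0, log(2^{−n}·L(p))} ≤ ℓ(p) ≤ 2·log(L(p)). -/

import Mathlib

open Polynomial Finset
set_option maxHeartbeats 1000000


private lemma normSq_step (a u v : ℂ) :
    Complex.normSq (u - a * v) =
      Complex.normSq ((starRingEnd ℂ a) * u - v) +
      (1 - Complex.normSq a) * (Complex.normSq u - Complex.normSq v) := by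
  simp only [Complex.normSq_apply, Complex.sub_re, Complex.sub_im, Complex.mul_re,
    Complex.mul_im, Complex.conj_re, Complex.conj_im]
  ring

private lemma sum_normSq_X_mul (n : ℕ) (q : Polynomial ℂ) (hq : q.coeff n = 0) :
    ∑ j ∈ range (n + 1), Complex.normSq ((X * q).coeff j)
      = ∑ j ∈ range (n + 1), Complex.normSq (q.coeff j) := by
  rw [Finset.sum_range_succ' _ n, Finset.sum_range_succ]
  simp [hq, Polynomial.coeff_X_mul, Polynomial.mul_coeff_zero]

private lemma l2_swap (n : ℕ) (a : ℂ) (q : Polynomial ℂ) (hq : q.coeff n = 0) :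
    ∑ j ∈ range (n + 1), Complex.normSq (((X - C a) * q).coeff j)
      = ∑ j ∈ range (n + 1), Complex.normSq (((C (starRingEnd ℂ a) * X - 1) * q).coeff j) := by
  have h1 : ∀ j, ((X - C a) * q).coeff j = (X * q).coeff j - a * q.coeff j := by
    intro j; rw [sub_mul, coeff_sub, coeff_C_mul]
  have h2 : ∀ j, ((C (starRingEnd ℂ a) * X - 1) * q).coeff j
      = (starRingEnd ℂ a) * (X * q).coeff j - q.coeff j := by
    intro j; rw [sub_mul, one_mul, coeff_sub, mul_assoc, coeff_C_mul]
  simp only [h1, h2, normSq_step]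
  rw [Finset.sum_add_distrib, ← Finset.mul_sum, Finset.sum_sub_distrib,
    sum_normSq_X_mul n q hq, sub_self, mul_zero, add_zero]


private lemma coeff_prod_bound {ι : Type*} [DecidableEq ι] (s : Finset ι) (b : ι → ℂ) :
    ∀ j, ‖(∏ i ∈ s, (X - C (b i))).coeff j‖
      ≤ (s.card.choose j : ℝ) * ∏ i ∈ s, max 1 (‖b i‖) := by
  induction s using Finset.induction with
  | empty => intro j; cases j <;> simp [Polynomial.coeff_one]
  | @insert i s hi ih =>
    intro j
    rw [Finset.prod_insert hi, Finset.prod_insert hi, Finset.card_insert_of_notMem hi]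
    set q := ∏ k ∈ s, (X - C (b k)) with hqdef
    set Mq := ∏ k ∈ s, max 1 (‖b k‖) with hMdef
    have hM1 : (1:ℝ) ≤ Mq := by
      calc (1:ℝ) = ∏ k ∈ s, 1 := by simp
      _ ≤ Mq := Finset.prod_le_prod (fun _ _ => zero_le_one) (fun k _ => le_max_left _ _)
    have hb1 : (1:ℝ) ≤ max 1 (‖b i‖) := le_max_left _ _
    have hb : ‖b i‖ ≤ max 1 (‖b i‖) := le_max_right _ _
    have hcoeff : ((X - C (b i)) * q).coeff j = (X * q).coeff j - b i * q.coeff j := by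
      rw [sub_mul, coeff_sub, coeff_C_mul]
    have htri : ‖((X - C (b i)) * q).coeff j‖
        ≤ ‖(X * q).coeff j‖ + ‖b i‖ * ‖q.coeff j‖ := by
      rw [hcoeff, ← norm_mul]
      exact norm_sub_le _ _
    rcases j with _ | j
    · have h0 : (X * q).coeff 0 = 0 := by simp [Polynomial.mul_coeff_zero]
      have := ih 0
      have hq0 := norm_nonneg (q.coeff 0)
      simp only [h0, map_zero, norm_zero, zero_add] at htri
      simp only [Nat.choose_zero_right, Nat.cast_one, one_mul] at this ⊢
      exact htri.trans (mul_le_mul hb this hq0 (by linarith))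
    · have hX : (X * q).coeff (j + 1) = q.coeff j := Polynomial.coeff_X_mul q j
      rw [hX] at htri
      have i1 := ih j
      have i2 := ih (j + 1)
      have hq1 := norm_nonneg (q.coeff (j+1))
      have hc1 : (0:ℝ) ≤ (s.card.choose j : ℝ) := Nat.cast_nonneg _
      have hc2 : (0:ℝ) ≤ (s.card.choose (j+1) : ℝ) := Nat.cast_nonneg _
      have hchoose : ((s.card + 1).choose (j + 1) : ℝ)
          = (s.card.choose j : ℝ) + (s.card.choose (j+1) : ℝ) := by
        rw [Nat.choose_succ_succ]; push_cast; ring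
      rw [hchoose]
      have hMq0 : (0:ℝ) ≤ Mq := by linarith
      have key1 : ‖b i‖ * ‖q.coeff (j+1)‖
          ≤ max 1 (‖b i‖) * ((s.card.choose (j+1) : ℝ) * Mq) :=
        mul_le_mul hb i2 hq1 (by linarith)
      have key2 : (0:ℝ) ≤ (max 1 (‖b i‖) - 1) * ((s.card.choose j : ℝ) * Mq) :=
        mul_nonneg (by linarith) (mul_nonneg hc1 hMq0)
      nlinarith [htri, i1, key1, key2]

private lemma landau (n : ℕ) (a : Fin n → ℂ) :
    ∏ i, max 1 (‖a i‖) ≤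
      ∑ j ∈ Finset.range (n + 1), ‖(∏ i, (X - C (a i))).coeff j‖ := by
  classical
  set g : Fin n → Polynomial ℂ := fun i =>
    if 1 < ‖a i‖ then C (starRingEnd ℂ (a i)) * X - 1 else X - C (a i) with hg
  have hdeg_g : ∀ i, (g i).natDegree ≤ 1 := by
    intro i
    by_cases h : 1 < ‖a i‖
    · have : g i = C (starRingEnd ℂ (a i)) * X - 1 := by simp only [hg, if_pos h]
      rw [this]
      refine le_trans (natDegree_sub_le _ _) ?_
      simp only [natDegree_one, max_le_iff]
      exact ⟨le_trans (natDegree_C_mul_le _ _) (by simp), by simp⟩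
    · have : g i = X - C (a i) := by simp only [hg, if_neg h]
      rw [this]; exact natDegree_X_sub_C_le _
  -- the L2 invariance
  have key : ∀ s : Finset (Fin n),
      ∑ j ∈ range (n + 1), Complex.normSq
        (((∏ i ∈ s, (X - C (a i))) * ∏ i ∈ sᶜ, g i).coeff j)
      = ∑ j ∈ range (n + 1), Complex.normSq ((∏ i, g i).coeff j) := by
    intro s
    induction s using Finset.induction with
    | empty => simp
    | @insert i s hi ih =>
      set r : Polynomial ℂ := (∏ k ∈ s, (X - C (a k))) * ∏ k ∈ (insert i s)ᶜ, g k with hr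
      have hmem : i ∈ sᶜ := by simp [hi]
      have hsplit : (sᶜ : Finset (Fin n)) = insert i ((insert i s)ᶜ) := by
        rw [Finset.compl_insert, Finset.insert_erase hmem]
      have hnotmem : i ∉ ((insert i s)ᶜ) := by simp
      have h1 : (∏ k ∈ insert i s, (X - C (a k))) * ∏ k ∈ (insert i s)ᶜ, g k
          = (X - C (a i)) * r := by
        rw [Finset.prod_insert hi, hr]; ring
      have h2 : (∏ k ∈ s, (X - C (a k))) * ∏ k ∈ sᶜ, g k = g i * r := by
        rw [hsplit, Finset.prod_insert hnotmem, hr]; ring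
      -- degree of r
      have hrdeg : r.natDegree < n := by
        have d1 : (∏ k ∈ s, (X - C (a k))).natDegree ≤ s.card := by
          apply le_trans (natDegree_prod_le _ _)
          apply le_trans (Finset.sum_le_sum fun k _ => natDegree_X_sub_C_le (a k))
          simp
        have d2 : (∏ k ∈ (insert i s)ᶜ, g k).natDegree ≤ ((insert i s)ᶜ).card := by
          apply le_trans (natDegree_prod_le _ _)
          apply le_trans (Finset.sum_le_sum fun k _ => hdeg_g k)
          simp
        have hcard : ((insert i s)ᶜ).card = n - (s.card + 1) := by
          rw [Finset.card_compl, Finset.card_insert_of_notMem hi]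
          simp
        have hcard2 : s.card + 1 ≤ n := by
          have h' := Finset.card_le_univ (insert i s)
          rw [Finset.card_insert_of_notMem hi] at h'
          simpa using h'
        have := natDegree_mul_le (p := ∏ k ∈ s, (X - C (a k))) (q := ∏ k ∈ (insert i s)ᶜ, g k)
        rw [← hr] at this
        omega
      have hrc : r.coeff n = 0 := coeff_eq_zero_of_natDegree_lt hrdeg
      rw [h1, ← ih, h2]
      by_cases h : 1 < ‖a i‖
      · have hgi : g i = C (starRingEnd ℂ (a i)) * X - 1 := by simp only [hg, if_pos h]
        rw [hgi, l2_swap n (a i) r hrc]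
      · have hgi : g i = X - C (a i) := by simp only [hg, if_neg h]
        rw [hgi]
  -- finish
  have hcoeffn : (∏ i, g i).coeff n = ∏ i, (g i).coeff 1 := by
    have := coeff_prod_of_natDegree_le (s := (univ : Finset (Fin n))) g 1 (fun p _ => hdeg_g p)
    simpa using this
  have hcoeff1 : ∀ i, ‖(g i).coeff 1‖ = max 1 (‖a i‖) := by
    intro i
    by_cases h : 1 < ‖a i‖
    · have hgi : g i = C (starRingEnd ℂ (a i)) * X - 1 := by simp only [hg, if_pos h]
      rw [hgi]
      simp [coeff_sub, coeff_one, max_eq_right (le_of_lt h)]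
    · have hgi : g i = X - C (a i) := by simp only [hg, if_neg h]
      rw [hgi]
      simp [coeff_sub, coeff_C, max_eq_left (not_lt.mp h)]
  set M : ℝ := ∏ i, max 1 (‖a i‖) with hM
  set L : ℝ := ∑ j ∈ Finset.range (n + 1), ‖(∏ i, (X - C (a i))).coeff j‖ with hL
  have hM0 : 0 ≤ M := Finset.prod_nonneg fun i _ => le_trans zero_le_one (le_max_left _ _)
  have hL0 : 0 ≤ L := Finset.sum_nonneg fun j _ => norm_nonneg _
  have hM2 : M ^ 2 = Complex.normSq ((∏ i, g i).coeff n) := by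
    rw [hcoeffn, ← Complex.sq_norm, norm_prod]
    congr 1
    exact Finset.prod_congr rfl fun i _ => (hcoeff1 i).symm
  have step1 : M ^ 2 ≤ ∑ j ∈ range (n + 1), Complex.normSq ((∏ i, g i).coeff j) := by
    rw [hM2]
    exact Finset.single_le_sum (fun j _ => Complex.normSq_nonneg _) (by simp)
  have step2 : ∑ j ∈ range (n + 1), Complex.normSq ((∏ i, (X - C (a i))).coeff j) ≤ L ^ 2 := by
    rw [hL]
    calc ∑ j ∈ range (n + 1), Complex.normSq ((∏ i, (X - C (a i))).coeff j)
        = ∑ j ∈ range (n + 1), (‖(∏ i, (X - C (a i))).coeff j‖) ^ 2 := by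
          refine Finset.sum_congr rfl fun j _ => ?_
          rw [Complex.sq_norm]
      _ ≤ _ := Finset.sum_sq_le_sq_sum_of_nonneg fun j _ => norm_nonneg _
  have hswap := key Finset.univ
  simp only [Finset.compl_univ, Finset.prod_empty, mul_one] at hswap
  have : M ^ 2 ≤ L ^ 2 := by
    calc M ^ 2 ≤ _ := step1
    _ = _ := hswap.symm
    _ ≤ L ^ 2 := step2
  nlinarith

private lemma real_part (n : ℕ) (hn : 1 ≤ n) (x : Fin n → ℝ) (hsum : ∑ i, x i = 0)
    (L M : ℝ) (hM1 : 1 ≤ M) (hlogM : Real.log M = ∑ i, max 0 (x i))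
    (hML : M ≤ L) (hLM : L ≤ 2 ^ n * M) :
    2 * Real.sqrt (2 / n) * max 0 (Real.log (((2 : ℝ) ^ n)⁻¹ * L)) ≤
      Real.sqrt (∑ i, 2 * x i ^ 2) ∧
    Real.sqrt (∑ i, 2 * x i ^ 2) ≤ 2 * Real.log L := by
  have hMpos : (0:ℝ) < M := lt_of_lt_of_le one_pos hM1
  have hL1 : (1:ℝ) ≤ L := le_trans hM1 hML
  have hLpos : (0:ℝ) < L := lt_of_lt_of_le one_pos hL1
  have hnpos : (0:ℝ) < n := by exact_mod_cast Nat.lt_of_lt_of_le Nat.zero_lt_one hn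
  set P : ℝ := ∑ i, max 0 (x i) with hPdef
  have hP0 : 0 ≤ P := Finset.sum_nonneg fun i _ => le_max_left _ _
  have hxiP : ∀ i, |x i| ≤ P := by
    intro i
    rw [abs_le]
    constructor
    · have h1 : x i + ∑ j ∈ univ.erase i, x j = ∑ j, x j :=
        Finset.add_sum_erase univ x (Finset.mem_univ i)
      have h2 : ∑ j ∈ univ.erase i, x j ≤ ∑ j ∈ univ.erase i, max 0 (x j) :=
        Finset.sum_le_sum fun j _ => le_max_right _ _
      have h3 : ∑ j ∈ univ.erase i, max 0 (x j) ≤ P :=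
        Finset.sum_le_sum_of_subset_of_nonneg (Finset.subset_univ _)
          (fun j _ _ => le_max_left _ _)
      rw [hsum] at h1
      linarith
    · have h4 : max 0 (x i) ≤ P :=
        Finset.single_le_sum (fun j _ => le_max_left 0 (x j)) (Finset.mem_univ i)
      linarith [le_max_right 0 (x i)]
  have habsum : ∑ i, |x i| = 2 * P := by
    have h : ∀ i ∈ (univ : Finset (Fin n)), |x i| = 2 * max 0 (x i) - x i := by
      intro i _
      rcases le_or_gt (x i) 0 with h | h
      · rw [abs_of_nonpos h, max_eq_left h]; ring
      · rw [abs_of_pos h, max_eq_right h.le]; ring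
    rw [Finset.sum_congr rfl h, Finset.sum_sub_distrib, ← Finset.mul_sum, hsum, sub_zero]
  set S : ℝ := ∑ i, x i ^ 2 with hSdef
  have hS0 : 0 ≤ S := Finset.sum_nonneg fun i _ => sq_nonneg _
  have hS2P : S ≤ 2 * P ^ 2 := by
    have h : ∀ i ∈ (univ : Finset (Fin n)), x i ^ 2 ≤ P * |x i| := by
      intro i _
      calc x i ^ 2 = |x i| * |x i| := by rw [← abs_mul, abs_mul_self]; ring
        _ ≤ P * |x i| := mul_le_mul_of_nonneg_right (hxiP i) (abs_nonneg _)
    calc S ≤ ∑ i, P * |x i| := Finset.sum_le_sum h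
      _ = P * (2 * P) := by rw [← Finset.mul_sum, habsum]
      _ = 2 * P ^ 2 := by ring
  have hCS : (2 * P) ^ 2 ≤ n * S := by
    have h1 := sq_sum_le_card_mul_sum_sq (s := (univ : Finset (Fin n)))
      (f := fun i => |x i|)
    rw [habsum] at h1
    simpa [sq_abs, Finset.card_univ] using h1
  have hPL : P ≤ Real.log L := by
    rw [← hlogM]
    exact (Real.log_le_log_iff hMpos hLpos).mpr hML
  have hsum2 : ∑ i, 2 * x i ^ 2 = 2 * S := by rw [hSdef, Finset.mul_sum]
  constructor
  · have hpos : (0:ℝ) < ((2:ℝ) ^ n)⁻¹ * L := by positivity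
    have hle : ((2:ℝ) ^ n)⁻¹ * L ≤ M := by
      rw [inv_mul_le_iff₀ (by positivity)]
      exact hLM
    have hmaxP : max 0 (Real.log (((2:ℝ) ^ n)⁻¹ * L)) ≤ P := by
      apply max_le hP0
      calc Real.log (((2:ℝ) ^ n)⁻¹ * L) ≤ Real.log M := (Real.log_le_log_iff hpos hMpos).mpr hle
        _ = P := hlogM
    have hsqrt2 : Real.sqrt (2 / n) ^ 2 = 2 / n := Real.sq_sqrt (by positivity)
    have hsq : (2 * Real.sqrt (2 / n) * P) ^ 2 ≤ 2 * S := by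
      have expand : (2 * Real.sqrt (2 / n) * P) ^ 2 = (8 * P ^ 2) / n := by
        rw [mul_pow, mul_pow, hsqrt2]; ring
      rw [expand, div_le_iff₀ hnpos]
      nlinarith [hCS]
    calc 2 * Real.sqrt (2 / n) * max 0 (Real.log (((2:ℝ) ^ n)⁻¹ * L))
        ≤ 2 * Real.sqrt (2 / n) * P := by
          apply mul_le_mul_of_nonneg_left hmaxP (by positivity)
      _ ≤ Real.sqrt (∑ i, 2 * x i ^ 2) := by
          rw [hsum2]
          exact (Real.le_sqrt (by positivity) (by positivity)).mpr hsq
  · have hlogL0 : 0 ≤ Real.log L := Real.log_nonneg hL1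
    have h2S : 2 * S ≤ (2 * Real.log L) ^ 2 := by nlinarith [hS2P, hP0, hPL]
    calc Real.sqrt (∑ i, 2 * x i ^ 2) = Real.sqrt (2 * S) := by rw [hsum2]
      _ ≤ Real.sqrt ((2 * Real.log L) ^ 2) := Real.sqrt_le_sqrt h2S
      _ = 2 * Real.log L := Real.sqrt_sq (by linarith)



/-- Bounds on the translation length `ℓ(p) = √(∑ 2 (log |aᵢ|)²)` in terms of the length
`L(p) = ∑ |coefficients|` of `p(X) = ∏ (X - aᵢ)` when `∏ aᵢ = 1`:
`2 √(2/n) max(0, log(2⁻ⁿ L(p))) ≤ ℓ(p) ≤ 2 log L(p)`. -/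
theorem stmt_10 (n : ℕ) (hn : 2 ≤ n) (a : Fin n → ℂ) (ha : ∏ i, a i = 1) :
    2 * Real.sqrt (2 / n) *
      max 0 (Real.log (((2 : ℝ) ^ n)⁻¹ *
        ∑ j ∈ Finset.range (n + 1),
          ‖(∏ i, (X - C (a i))).coeff j‖)) ≤
      Real.sqrt (∑ i, 2 * (Real.log (‖a i‖)) ^ 2) ∧
    Real.sqrt (∑ i, 2 * (Real.log (‖a i‖)) ^ 2) ≤
      2 * Real.log (∑ j ∈ Finset.range (n + 1),
        ‖(∏ i, (X - C (a i))).coeff j‖) := by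
  classical
  have h0 : ∀ i, a i ≠ 0 := by
    intro i hz
    have h := Finset.prod_eq_zero (Finset.mem_univ i) hz
    rw [ha] at h; exact one_ne_zero h
  have habs_pos : ∀ i, 0 < ‖a i‖ := fun i => norm_pos_iff.mpr (h0 i)
  have hsum0 : ∑ i, Real.log (‖a i‖) = 0 := by
    have hprod : ∏ i, ‖a i‖ = 1 := by rw [← norm_prod, ha, norm_one]
    have hl := Real.log_prod (s := Finset.univ) (f := fun i => ‖a i‖)
      (fun i _ => (habs_pos i).ne')
    rw [hprod, Real.log_one] at hl
    exact hl.symm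
  have hlogM : Real.log (∏ i, max 1 (‖a i‖))
      = ∑ i, max 0 (Real.log (‖a i‖)) := by
    rw [Real.log_prod (fun i _ => by positivity)]
    refine Finset.sum_congr rfl fun i _ => ?_
    rcases le_or_gt (‖a i‖) 1 with h | h
    · rw [max_eq_left h, Real.log_one, max_eq_left (Real.log_nonpos (habs_pos i).le h)]
    · rw [max_eq_right h.le, max_eq_right (Real.log_nonneg h.le)]
  have hM1 : (1:ℝ) ≤ ∏ i, max 1 (‖a i‖) := by
    calc (1:ℝ) = ∏ _i : Fin n, 1 := by simp
      _ ≤ _ := Finset.prod_le_prod (fun _ _ => zero_le_one) (fun i _ => le_max_left _ _)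
  have hML := landau n a
  have hLM : (∑ j ∈ Finset.range (n+1), ‖(∏ i, (X - C (a i))).coeff j‖)
      ≤ 2 ^ n * ∏ i, max 1 (‖a i‖) := by
    have hterm : ∀ j ∈ Finset.range (n+1),
        ‖(∏ i, (X - C (a i))).coeff j‖
          ≤ (n.choose j : ℝ) * ∏ i, max 1 (‖a i‖) :=
      fun j _ => by simpa using coeff_prod_bound Finset.univ a j
    have h1 := Finset.sum_le_sum hterm
    have h2 : ∑ j ∈ Finset.range (n+1), (n.choose j : ℝ) * ∏ i, max 1 (‖a i‖)
        = 2 ^ n * ∏ i, max 1 (‖a i‖) := by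
      rw [← Finset.sum_mul, ← Nat.cast_sum, Nat.sum_range_choose]
      push_cast; ring
    rw [h2] at h1
    exact h1
  exact real_part n (by omega) (fun i => Real.log (‖a i‖)) hsum0
    _ _ hM1 hlogM hML hLM
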